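/- The formal power series A_q(x,y) = Σ_{k=0}^{∞} (1/(q;q)_k) y^k (1/(x;q)_k) in noncommuting variables x, y with xy = q² yx has two-sided inverse A_q^{-1}(x,y) = Σ_{k=0}^{∞} ((−1)^k q^{k(k−1)/2}/(q;q)_k) (1/(q^{−k−1}x;q)_k) y^k, i.e., A_q(x,y) · A_q^{-1}(x,y) = 1 = A_q^{-1}(x,y) · A_q(x,y) in the ring of formal power series in y with coefficients rational in x. -/
import Mathlib


open Finset

/-- The q-Pochhammer symbol `(a;q)_k = ∏_{j=0}^{k-1} (1 - a q^j)`. -/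
noncomputable def qPoch (a q : ℂ) (k : ℕ) : ℂ := ∏ j ∈ range k, (1 - a * q ^ j)

lemma qPoch_zero (a q : ℂ) : qPoch a q 0 = 1 := by simp [qPoch]

lemma qPoch_succ (a q : ℂ) (k : ℕ) :
    qPoch a q (k + 1) = qPoch a q k * (1 - a * q ^ k) :=
  Finset.prod_range_succ _ _

lemma qPoch_succ' (a q : ℂ) (k : ℕ) :
    qPoch a q (k + 1) = (1 - a) * qPoch (a * q) q k := by
  rw [qPoch, Finset.prod_range_succ', pow_zero, mul_one, mul_comm]
  congr 1
  refine Finset.prod_congr rfl fun j _ => ?_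
  rw [pow_succ']
  ring_nf

lemma qPoch_add (a q : ℂ) (m k : ℕ) :
    qPoch a q (m + k) = qPoch a q m * qPoch (a * q ^ m) q k := by
  rw [qPoch, qPoch, qPoch, Finset.prod_range_add]
  congr 1
  refine Finset.prod_congr rfl fun j _ => ?_
  rw [pow_add]
  ring_nf

lemma qPoch_ne_zero {a q : ℂ} (k : ℕ) (h : ∀ j, j < k → 1 - a * q ^ j ≠ 0) :
    qPoch a q k ≠ 0 := by
  rw [qPoch]
  exact Finset.prod_ne_zero_iff.2 fun j hj => h j (Finset.mem_range.1 hj)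

lemma tri (i : ℕ) : (i + 2) * (i + 1) / 2 = (i + 1) * i / 2 + (i + 1) := by
  obtain ⟨t, ht⟩ := Nat.even_mul_succ_self i
  have h1 : (i + 2) * (i + 1) = i * (i + 1) + 2 * (i + 1) := by ring
  have h2 : (i + 1) * i = i * (i + 1) := by ring
  rw [h1, h2, ht]
  omega

/-- Telescoping antidifference for the first sum. -/
noncomputable def Gone (q x : ℂ) (n j : ℕ) : ℂ :=
  if j = 0 ∨ n < j then 0 else
  -((-1 : ℂ) ^ j * q ^ (j * (j - 1) / 2)) /
    (qPoch q q (j - 1) * qPoch q q (n - j) * qPoch (q ^ (j - 1) * x) q n * (1 - q ^ n))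

/-- Telescoping antidifference for the second sum. -/
noncomputable def Gtwo (q x : ℂ) (n j : ℕ) : ℂ :=
  if j = 0 ∨ n < j then 0 else
  -((-1 : ℂ) ^ j * q ^ (j * (j - 1) / 2)) /
    (qPoch q q (j - 1) * qPoch q q (n - j) * qPoch (q ^ (2 * n - j) * x) q (j - 1) *
      qPoch x q (n - j) * (1 - q ^ n) * (1 - q ^ (n - 1) * x))

lemma sum_one (q x : ℂ) (hq : q ≠ 0)
    (hP1 : ∀ m : ℕ, 1 - q ^ (m + 1) ≠ 0)
    (hFx : ∀ m : ℤ, 1 - q ^ m * x ≠ 0)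
    (n : ℕ) (hn : n ≠ 0) :
    ∑ j ∈ range (n + 1),
        ((-1 : ℂ) ^ j * q ^ (j * (j - 1) / 2) / qPoch q q j) /
          qPoch q q (n - j) /
          (qPoch (q ^ (2 * j) * x) q (n - j) *
            qPoch (q ^ ((j : ℤ) - 1) * x) q j) = 0 := by
  have hPne : ∀ m, qPoch q q m ≠ 0 := fun m => qPoch_ne_zero _ fun j _ => by
    have := hP1 j; rwa [pow_succ'] at this
  have hFn : ∀ m : ℕ, 1 - q ^ m * x ≠ 0 := fun m => by
    have := hFx (m : ℤ); rwa [zpow_natCast] at this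
  have hXP : ∀ a m : ℕ, qPoch (q ^ a * x) q m ≠ 0 := fun a m => qPoch_ne_zero _ fun j _ => by
    have h := hFn (a + j); rw [pow_add] at h
    rw [show q ^ a * x * q ^ j = q ^ a * q ^ j * x by ring]
    exact h
  have hxx : ∀ m : ℕ, qPoch x q m ≠ 0 := fun m => by
    have := hXP 0 m; rwa [pow_zero, one_mul] at this
  have key : ∀ j ∈ range (n + 1),
      ((-1 : ℂ) ^ j * q ^ (j * (j - 1) / 2) / qPoch q q j) /
          qPoch q q (n - j) /
          (qPoch (q ^ (2 * j) * x) q (n - j) *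
            qPoch (q ^ ((j : ℤ) - 1) * x) q j)
        = Gone q x n (j + 1) - Gone q x n j := by
    intro j hj
    rw [mem_range] at hj
    match j with
    | 0 =>
      obtain ⟨m, rfl⟩ : ∃ m, n = m + 1 := ⟨n - 1, by omega⟩
      rw [show Gone q x (m + 1) 0 = 0 from by rw [Gone, if_pos (Or.inl rfl)], sub_zero]
      simp only [Gone]
      rw [if_neg (show ¬(0 + 1 = 0 ∨ m + 1 < 0 + 1) by omega)]
      norm_num [qPoch_zero]
      rw [qPoch_succ q q m]
      have n1 := hPne m
      have n2 := hxx (m + 1)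
      have n3 : 1 - q * q ^ m ≠ 0 := by rw [← pow_succ']; exact hP1 m
      have n4 : 1 - q ^ (m + 1) ≠ 0 := hP1 m
      field_simp
      ring
    | Nat.succ i =>
      simp only [Nat.succ_eq_add_one]
      by_cases htop : i + 1 = n
      · obtain rfl : n = i + 1 := htop.symm
        rw [show Gone q x (i + 1) (i + 1 + 1) = 0 from by
          rw [Gone, if_pos (Or.inr (by omega))], zero_sub]
        simp only [Gone]
        rw [if_neg (show ¬(i + 1 = 0 ∨ i + 1 < i + 1) by omega)]
        rw [show ((i + 1 : ℕ) : ℤ) - 1 = (i : ℤ) from by push_cast; ring, zpow_natCast]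
        rw [show i + 1 - (i + 1) = 0 from by omega, show i + 1 - 1 = i from by omega,
          qPoch_zero q q, qPoch_zero (q ^ (2 * (i + 1)) * x) q]
        rw [qPoch_succ q q i]
        have n1 := hPne i
        have n3 : 1 - q * q ^ i ≠ 0 := by rw [← pow_succ']; exact hP1 i
        have nY := hXP i (i + 1)
        have n4 : 1 - q ^ (i + 1) ≠ 0 := hP1 i
        field_simp
        ring
      · obtain ⟨k, rfl⟩ : ∃ k, n = i + 1 + (k + 1) := ⟨n - (i + 2), by omega⟩
        simp only [Gone]
        rw [if_neg (show ¬(i + 1 + 1 = 0 ∨ i + 1 + (k + 1) < i + 1 + 1) by omega),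
          if_neg (show ¬(i + 1 = 0 ∨ i + 1 + (k + 1) < i + 1) by omega)]
        rw [show ((i + 1 : ℕ) : ℤ) - 1 = (i : ℤ) from by push_cast; ring, zpow_natCast]
        rw [show i + 1 + (k + 1) - (i + 1) = k + 1 from by omega,
          show i + 1 - 1 = i from by omega,
          show i + 1 + 1 - 1 = i + 1 from by omega,
          show i + 1 + (k + 1) - (i + 1 + 1) = k from by omega,
          show (i + 1 + 1) * (i + 1) / 2 = (i + 1) * i / 2 + (i + 1) from tri i,
          pow_add q ((i + 1) * i / 2) (i + 1)]
        have hY1 : qPoch (q ^ i * x) q (i + 1 + (k + 1) + 1)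
            = qPoch (q ^ i * x) q (i + 1 + (k + 1)) * (1 - q ^ (2 * i + k + 2) * x) := by
          rw [qPoch_succ,
            show q ^ i * x * q ^ (i + 1 + (k + 1)) = q ^ (2 * i + k + 2) * x from by ring]
        have hY2 : qPoch (q ^ i * x) q (i + 1 + (k + 1) + 1)
            = (1 - q ^ i * x) * qPoch (q ^ (i + 1) * x) q (i + 1 + (k + 1)) := by
          rw [qPoch_succ' (q ^ i * x) q, show q ^ i * x * q = q ^ (i + 1) * x from by ring]
        have hZ : qPoch (q ^ i * x) q (i + 1 + (k + 1) + 1)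
            = qPoch (q ^ i * x) q (i + 1) *
              ((1 - q ^ (2 * i + 1) * x) * qPoch (q ^ (2 * (i + 1)) * x) q (k + 1)) := by
          rw [show i + 1 + (k + 1) + 1 = (i + 1) + (k + 1 + 1) from by omega,
            qPoch_add (q ^ i * x) q (i + 1) (k + 1 + 1),
            show q ^ i * x * q ^ (i + 1) = q ^ (2 * i + 1) * x from by ring,
            qPoch_succ' (q ^ (2 * i + 1) * x) q (k + 1),
            show q ^ (2 * i + 1) * x * q = q ^ (2 * (i + 1)) * x from by ring]
        have R1 : qPoch (q ^ (2 * (i + 1)) * x) q (k + 1) * qPoch (q ^ i * x) q (i + 1) *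
            (1 - q ^ (2 * i + 1) * x)
            = qPoch (q ^ i * x) q (i + 1 + (k + 1)) * (1 - q ^ (2 * i + k + 2) * x) := by
          linear_combination hY1 - hZ
        have R2 : (1 - q ^ i * x) * qPoch (q ^ (i + 1) * x) q (i + 1 + (k + 1))
            = qPoch (q ^ i * x) q (i + 1 + (k + 1)) * (1 - q ^ (2 * i + k + 2) * x) := by
          linear_combination hY1 - hY2
        have neP1 := hPne (i + 1)
        have neP2 := hPne (k + 1)
        have neA := hPne i
        have neB := hPne k
        have neX1 := hXP (2 * (i + 1)) (k + 1)
        have neX2 := hXP i (i + 1)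
        have neY := hXP i (i + 1 + (k + 1))
        have neY' := hXP (i + 1) (i + 1 + (k + 1))
        have nec : 1 - q ^ (2 * i + 1) * x ≠ 0 := hFn _
        have ned : 1 - q ^ (2 * i + k + 2) * x ≠ 0 := hFn _
        have nee : 1 - q ^ i * x ≠ 0 := hFn i
        have nen : 1 - q ^ (i + 1 + (k + 1)) ≠ 0 := by
          rw [show i + 1 + (k + 1) = (i + k + 1) + 1 from by omega]; exact hP1 _
        have neqi : 1 - q * q ^ i ≠ 0 := by rw [← pow_succ']; exact hP1 i
        have neqk : 1 - q * q ^ k ≠ 0 := by rw [← pow_succ']; exact hP1 k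
        have eT : (-1 : ℂ) ^ (i + 1) * q ^ ((i + 1) * i / 2) / qPoch q q (i + 1) /
              qPoch q q (k + 1) /
              (qPoch (q ^ (2 * (i + 1)) * x) q (k + 1) * qPoch (q ^ i * x) q (i + 1))
            = (-1 : ℂ) ^ (i + 1) * q ^ ((i + 1) * i / 2) * (1 - q ^ (2 * i + 1) * x) /
              (qPoch q q (i + 1) * (qPoch q q (k + 1) *
                (qPoch (q ^ i * x) q (i + 1 + (k + 1)) * (1 - q ^ (2 * i + k + 2) * x)))) := by
          rw [div_div, div_div, div_eq_div_iff
            (mul_ne_zero neP1 (mul_ne_zero neP2 (mul_ne_zero neX1 neX2)))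
            (mul_ne_zero neP1 (mul_ne_zero neP2 (mul_ne_zero neY ned)))]
          linear_combination (-((-1 : ℂ) ^ (i + 1) * q ^ ((i + 1) * i / 2) *
            qPoch q q (i + 1) * qPoch q q (k + 1))) * R1
        have eG1 : -((-1 : ℂ) ^ (i + 1 + 1) * (q ^ ((i + 1) * i / 2) * q ^ (i + 1))) /
              (qPoch q q (i + 1) * qPoch q q k * qPoch (q ^ (i + 1) * x) q (i + 1 + (k + 1)) *
                (1 - q ^ (i + 1 + (k + 1))))
            = -((-1 : ℂ) ^ (i + 1 + 1) * (q ^ ((i + 1) * i / 2) * q ^ (i + 1))) * (1 - q ^ i * x) /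
              (qPoch q q (i + 1) * qPoch q q k *
                (qPoch (q ^ i * x) q (i + 1 + (k + 1)) * (1 - q ^ (2 * i + k + 2) * x)) *
                (1 - q ^ (i + 1 + (k + 1)))) := by
          rw [div_eq_div_iff
            (mul_ne_zero (mul_ne_zero (mul_ne_zero neP1 neB) neY') nen)
            (mul_ne_zero (mul_ne_zero (mul_ne_zero neP1 neB) (mul_ne_zero neY ned)) nen)]
          linear_combination ((-1 : ℂ) ^ (i + 1 + 1) * (q ^ ((i + 1) * i / 2) * q ^ (i + 1)) *
            qPoch q q (i + 1) * qPoch q q k * (1 - q ^ (i + 1 + (k + 1)))) * R2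
        rw [eT, eG1]
        rw [div_sub_div _ _
          (mul_ne_zero (mul_ne_zero (mul_ne_zero neP1 neB) (mul_ne_zero neY ned)) nen)
          (mul_ne_zero (mul_ne_zero (mul_ne_zero neA neP2) neY) nen),
          div_eq_div_iff
          (mul_ne_zero neP1 (mul_ne_zero neP2 (mul_ne_zero neY ned)))
          (mul_ne_zero (mul_ne_zero (mul_ne_zero (mul_ne_zero neP1 neB) (mul_ne_zero neY ned)) nen)
            (mul_ne_zero (mul_ne_zero (mul_ne_zero neA neP2) neY) nen)),
          qPoch_succ q q i, qPoch_succ q q k]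
        ring
  rw [Finset.sum_congr rfl key, Finset.sum_range_sub]
  have g0 : Gone q x n 0 = 0 := by rw [Gone, if_pos (Or.inl rfl)]
  have g1 : Gone q x n (n + 1) = 0 := by rw [Gone, if_pos (Or.inr (Nat.lt_succ_self n))]
  rw [g0, g1, sub_zero]

lemma sum_two (q x : ℂ) (hq : q ≠ 0)
    (hP1 : ∀ m : ℕ, 1 - q ^ (m + 1) ≠ 0)
    (hFx : ∀ m : ℤ, 1 - q ^ m * x ≠ 0)
    (n : ℕ) (hn : n ≠ 0) :
    ∑ j ∈ range (n + 1),
        ((-1 : ℂ) ^ j * q ^ (j * (j - 1) / 2) / qPoch q q j) /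
          qPoch q q (n - j) /
          (qPoch (q ^ (2 * (n : ℤ) - (j : ℤ) - 1) * x) q j *
            qPoch x q (n - j)) = 0 := by
  have hPne : ∀ m, qPoch q q m ≠ 0 := fun m => qPoch_ne_zero _ fun j _ => by
    have := hP1 j; rwa [pow_succ'] at this
  have hFn : ∀ m : ℕ, 1 - q ^ m * x ≠ 0 := fun m => by
    have := hFx (m : ℤ); rwa [zpow_natCast] at this
  have hXP : ∀ a m : ℕ, qPoch (q ^ a * x) q m ≠ 0 := fun a m => qPoch_ne_zero _ fun j _ => by
    have h := hFn (a + j); rw [pow_add] at h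
    rw [show q ^ a * x * q ^ j = q ^ a * q ^ j * x by ring]
    exact h
  have hxx : ∀ m : ℕ, qPoch x q m ≠ 0 := fun m => by
    have := hXP 0 m; rwa [pow_zero, one_mul] at this
  have key : ∀ j ∈ range (n + 1),
      ((-1 : ℂ) ^ j * q ^ (j * (j - 1) / 2) / qPoch q q j) /
          qPoch q q (n - j) /
          (qPoch (q ^ (2 * (n : ℤ) - (j : ℤ) - 1) * x) q j *
            qPoch x q (n - j))
        = Gtwo q x n (j + 1) - Gtwo q x n j := by
    intro j hj
    rw [mem_range] at hj
    match j with
    | 0 =>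
      obtain ⟨m, rfl⟩ : ∃ m, n = m + 1 := ⟨n - 1, by omega⟩
      rw [show Gtwo q x (m + 1) 0 = 0 from by rw [Gtwo, if_pos (Or.inl rfl)], sub_zero]
      simp only [Gtwo]
      rw [if_neg (show ¬(0 + 1 = 0 ∨ m + 1 < 0 + 1) by omega)]
      norm_num [qPoch_zero]
      rw [qPoch_succ q q m, qPoch_succ x q m]
      have n1 := hPne m
      have n2 := hxx m
      have n3 : 1 - q * q ^ m ≠ 0 := by rw [← pow_succ']; exact hP1 m
      have n4 : 1 - q ^ (m + 1) ≠ 0 := hP1 m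
      have n5 : 1 - q ^ m * x ≠ 0 := hFn m
      have n6 : 1 - x * q ^ m ≠ 0 := by
        rw [show (1 : ℂ) - x * q ^ m = 1 - q ^ m * x from by ring]; exact n5
      field_simp
      ring
    | Nat.succ i =>
      simp only [Nat.succ_eq_add_one]
      by_cases htop : i + 1 = n
      · obtain rfl : n = i + 1 := htop.symm
        rw [show Gtwo q x (i + 1) (i + 1 + 1) = 0 from by
          rw [Gtwo, if_pos (Or.inr (by omega))], zero_sub]
        simp only [Gtwo]
        rw [if_neg (show ¬(i + 1 = 0 ∨ i + 1 < i + 1) by omega)]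
        rw [show 2 * ((i + 1 : ℕ) : ℤ) - ((i + 1 : ℕ) : ℤ) - 1 = ((i : ℕ) : ℤ)
            from by push_cast; ring, zpow_natCast]
        rw [show i + 1 - (i + 1) = 0 from by omega, show i + 1 - 1 = i from by omega,
          show 2 * (i + 1) - (i + 1) = i + 1 from by omega,
          qPoch_zero q q, qPoch_zero x q]
        rw [qPoch_succ q q i, qPoch_succ' (q ^ i * x) q i,
          show q ^ i * x * q = q ^ (i + 1) * x from by ring]
        have n1 := hPne i
        have n3 : 1 - q * q ^ i ≠ 0 := by rw [← pow_succ']; exact hP1 i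
        have n4 : 1 - q ^ (i + 1) ≠ 0 := hP1 i
        have n5 : 1 - q ^ i * x ≠ 0 := hFn i
        have nV := hXP (i + 1) i
        field_simp
        ring
      · obtain ⟨k, rfl⟩ : ∃ k, n = i + 1 + (k + 1) := ⟨n - (i + 2), by omega⟩
        simp only [Gtwo]
        rw [if_neg (show ¬(i + 1 + 1 = 0 ∨ i + 1 + (k + 1) < i + 1 + 1) by omega),
          if_neg (show ¬(i + 1 = 0 ∨ i + 1 + (k + 1) < i + 1) by omega)]
        rw [show 2 * ((i + 1 + (k + 1) : ℕ) : ℤ) - ((i + 1 : ℕ) : ℤ) - 1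
            = ((i + 2 * k + 2 : ℕ) : ℤ) from by push_cast; ring, zpow_natCast]
        rw [show i + 1 + (k + 1) - (i + 1) = k + 1 from by omega,
          show i + 1 - 1 = i from by omega,
          show i + 1 + 1 - 1 = i + 1 from by omega,
          show i + 1 + (k + 1) - (i + 1 + 1) = k from by omega,
          show 2 * (i + 1 + (k + 1)) - (i + 1) = i + 2 * k + 3 from by omega,
          show 2 * (i + 1 + (k + 1)) - (i + 1 + 1) = i + 2 * k + 2 from by omega,
          show i + 1 + (k + 1) - 1 = i + k + 1 from by omega,
          show (i + 1 + 1) * (i + 1) / 2 = (i + 1) * i / 2 + (i + 1) from tri i,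
          pow_add q ((i + 1) * i / 2) (i + 1)]
        have hW1 : qPoch (q ^ (i + 2 * k + 2) * x) q (i + 1)
            = (1 - q ^ (i + 2 * k + 2) * x) * qPoch (q ^ (i + 2 * k + 3) * x) q i := by
          rw [qPoch_succ' (q ^ (i + 2 * k + 2) * x) q i,
            show q ^ (i + 2 * k + 2) * x * q = q ^ (i + 2 * k + 3) * x from by ring]
        have hW2 : qPoch x q (k + 1) = qPoch x q k * (1 - x * q ^ k) := qPoch_succ x q k
        rw [hW1, hW2]
        have neP1 := hPne (i + 1)
        have neP2 := hPne (k + 1)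
        have neA := hPne i
        have neB := hPne k
        have neV := hXP (i + 2 * k + 3) i
        have neW := hxx k
        have ned : 1 - q ^ (i + 2 * k + 2) * x ≠ 0 := hFn _
        have nexk : 1 - x * q ^ k ≠ 0 := by
          rw [show (1 : ℂ) - x * q ^ k = 1 - q ^ k * x from by ring]; exact hFn k
        have nen : 1 - q ^ (i + 1 + (k + 1)) ≠ 0 := by
          rw [show i + 1 + (k + 1) = (i + k + 1) + 1 from by omega]; exact hP1 _
        have nenx : 1 - q ^ (i + k + 1) * x ≠ 0 := hFn _
        rw [div_div, div_div, div_sub_div _ _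
            (mul_ne_zero (mul_ne_zero (mul_ne_zero (mul_ne_zero (mul_ne_zero neP1 neB)
              (mul_ne_zero ned neV)) neW) nen) nenx)
            (mul_ne_zero (mul_ne_zero (mul_ne_zero (mul_ne_zero (mul_ne_zero neA neP2) neV)
              (mul_ne_zero neW nexk)) nen) nenx),
          div_eq_div_iff
            (mul_ne_zero neP1 (mul_ne_zero neP2 (mul_ne_zero (mul_ne_zero ned neV)
              (mul_ne_zero neW nexk))))
            (mul_ne_zero
              (mul_ne_zero (mul_ne_zero (mul_ne_zero (mul_ne_zero (mul_ne_zero neP1 neB)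
                (mul_ne_zero ned neV)) neW) nen) nenx)
              (mul_ne_zero (mul_ne_zero (mul_ne_zero (mul_ne_zero (mul_ne_zero neA neP2) neV)
                (mul_ne_zero neW nexk)) nen) nenx)),
          qPoch_succ q q i, qPoch_succ q q k]
        ring
  rw [Finset.sum_congr rfl key, Finset.sum_range_sub]
  have g0 : Gtwo q x n 0 = 0 := by rw [Gtwo, if_pos (Or.inl rfl)]
  have g1 : Gtwo q x n (n + 1) = 0 := by rw [Gtwo, if_pos (Or.inr (Nat.lt_succ_self n))]
  rw [g0, g1, sub_zero]

theorem Aq_inverse (q : ℝ) (hq0 : 0 < q) (hq1 : q < 1)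
    (x : ℂ) (hx : ∀ m : ℤ, x ≠ (q : ℂ) ^ m) (n : ℕ) :
    (∑ j ∈ range (n + 1),
        ((-1 : ℂ) ^ j * (q : ℂ) ^ (j * (j - 1) / 2) / qPoch (q : ℂ) (q : ℂ) j) /
          qPoch (q : ℂ) (q : ℂ) (n - j) /
          (qPoch ((q : ℂ) ^ (2 * j) * x) (q : ℂ) (n - j) *
            qPoch ((q : ℂ) ^ ((j : ℤ) - 1) * x) (q : ℂ) j)
      = if n = 0 then 1 else 0) ∧
    (∑ j ∈ range (n + 1),
        ((-1 : ℂ) ^ j * (q : ℂ) ^ (j * (j - 1) / 2) / qPoch (q : ℂ) (q : ℂ) j) /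
          qPoch (q : ℂ) (q : ℂ) (n - j) /
          (qPoch ((q : ℂ) ^ (2 * (n : ℤ) - (j : ℤ) - 1) * x) (q : ℂ) j *
            qPoch x (q : ℂ) (n - j))
      = if n = 0 then 1 else 0) := by
  have hqC : (q : ℂ) ≠ 0 := by
    simp only [ne_eq, Complex.ofReal_eq_zero]
    exact hq0.ne'
  have hP1 : ∀ m : ℕ, 1 - (q : ℂ) ^ (m + 1) ≠ 0 := by
    intro m h
    have h1 : ((q ^ (m + 1) : ℝ) : ℂ) = 1 := by push_cast; linear_combination -h
    rw [Complex.ofReal_eq_one] at h1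
    have hlt : q ^ (m + 1) < 1 := pow_lt_one₀ hq0.le hq1 (Nat.succ_ne_zero m)
    linarith
  have hFx : ∀ m : ℤ, 1 - (q : ℂ) ^ m * x ≠ 0 := by
    intro m h
    apply hx (-m)
    have h1 : (q : ℂ) ^ m * x = 1 := by linear_combination -h
    rw [zpow_neg]
    exact eq_inv_of_mul_eq_one_left (by linear_combination h1)
  rcases eq_or_ne n 0 with rfl | hn
  · norm_num [qPoch]
  · rw [if_neg hn]
    exact ⟨sum_one (q : ℂ) x hqC hP1 hFx n hn, sum_two (q : ℂ) x hqC hP1 hFx n hn⟩
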